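/- Let A be a Noetherian commutative ring, a ∈ A, and M a finitely generated A-module. Let M̂ = lim_n M/aⁿM denote the a-adic completion. Then the natural square with corners M, M̂, M[1/a], M̂[1/a] is a pullback: the map from M to the set of pairs (x, y) ∈ M̂ × M[1/a] having the same image in M̂[1/a] is a bijection. -/

import Mathlib

open AdicCompletion

namespace BLaux

variable {A : Type*} [CommRing A] (a : A)
variable {M : Type*} [AddCommGroup M] [Module A M]
variable {N : Type*} [AddCommGroup N] [Module A N]

lemma smul_quot_eq_zero (s : ℕ) (q : M ⧸ ((Ideal.span {a}) ^ s • ⊤ : Submodule A M)) :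
    a ^ s • q = 0 := by
  obtain ⟨w, rfl⟩ := Submodule.Quotient.mk_surjective _ q
  rw [← Submodule.Quotient.mk_smul, Submodule.Quotient.mk_eq_zero]
  exact Submodule.smul_mem_smul (Ideal.pow_mem_pow (Ideal.mem_span_singleton_self a) s) trivial

lemma mem_iff (s : ℕ) (z : M) :
    z ∈ ((Ideal.span {a}) ^ s • ⊤ : Submodule A M) ↔ ∃ w, z = a ^ s • w := by
  constructor
  · intro h
    rw [Ideal.span_singleton_pow] at h
    refine Submodule.smul_induction_on h (fun r hr m _ ↦ ?_) ?_
    · obtain ⟨b, rfl⟩ := Ideal.mem_span_singleton.mp hr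
      exact ⟨b • m, by rw [smul_smul, mul_comm]⟩
    · rintro x y ⟨w, rfl⟩ ⟨w', rfl⟩
      exact ⟨w + w', by rw [smul_add]⟩
  · rintro ⟨w, rfl⟩
    exact Submodule.smul_mem_smul (Ideal.pow_mem_pow (Ideal.mem_span_singleton_self a) s) trivial

variable (I : Ideal A)

lemma map_of (f : M →ₗ[A] N) (x : M) :
    AdicCompletion.map I f (of I M x) = of I N (f x) := by
  ext n
  simp [map_val_apply, of_apply]

lemma map_smul_id (r : A) (x : AdicCompletion I M) :
    AdicCompletion.map I (r • (LinearMap.id : M →ₗ[A] M)) x = r • x := by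
  ext n
  obtain ⟨w, hw⟩ := Submodule.Quotient.mk_surjective _ (x.val n)
  rw [map_val_apply, val_smul_apply, ← hw]
  simp [← Submodule.Quotient.mk_smul]

lemma torsion_bound [IsNoetherianRing A] [Module.Finite A M] :
    ∃ c : ℕ, ∀ (z : M) (t : ℕ), a ^ t • z = 0 → a ^ c • z = 0 := by
  have hmono : Monotone (fun t : ℕ ↦ LinearMap.ker ((a ^ t : A) • (LinearMap.id : M →ₗ[A] M))) := by
    intro t t' h z hz
    simp only [LinearMap.mem_ker, LinearMap.smul_apply, LinearMap.id_coe, id_eq] at hz ⊢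
    rw [← Nat.sub_add_cancel h, pow_add, mul_smul, hz, smul_zero]
  obtain ⟨c, hc⟩ := monotone_stabilizes_iff_noetherian.mpr inferInstance
    ⟨fun t : ℕ ↦ LinearMap.ker ((a ^ t : A) • (LinearMap.id : M →ₗ[A] M)), hmono⟩
  refine ⟨c, fun z t hz ↦ ?_⟩
  rcases le_total t c with h | h
  · rw [← Nat.sub_add_cancel h, pow_add, mul_smul, hz, smul_zero]
  · have h2 : LinearMap.ker ((a ^ c : A) • (LinearMap.id : M →ₗ[A] M)) =
        LinearMap.ker ((a ^ t : A) • (LinearMap.id : M →ₗ[A] M)) := hc t h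
    have hzt : z ∈ LinearMap.ker ((a ^ t : A) • (LinearMap.id : M →ₗ[A] M)) := by
      simpa using hz
    simpa using h2.ge hzt

lemma map_smul' (f : M →ₗ[A] N) (r : A) (x : AdicCompletion I M) :
    AdicCompletion.map I f (r • x) = r • AdicCompletion.map I f x := by
  ext n
  obtain ⟨w, hw⟩ := Submodule.Quotient.mk_surjective _ (x.val n)
  rw [map_val_apply, val_smul_apply, val_smul_apply, map_val_apply, ← hw, ← Submodule.Quotient.mk_smul,
    LinearMap.reduceModIdeal_apply, LinearMap.reduceModIdeal_apply, ← Submodule.Quotient.mk_smul,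
    map_smul]

end BLaux

namespace BLaux

section Small

universe u

variable {A : Type u} [CommRing A] (a : A)
variable {M : Type u} [AddCommGroup M] [Module A M]
variable [IsNoetherianRing A] [Module.Finite A M]

lemma exists_of_add_smul_small (x : AdicCompletion (Ideal.span {a}) M) (n : ℕ) :
    ∃ (m : M) (z : AdicCompletion (Ideal.span {a}) M),
      x = of (Ideal.span {a}) M m + (a ^ n : A) • z := by
  set R' : Submodule A M := LinearMap.range ((a ^ n : A) • (LinearMap.id : M →ₗ[A] M)) with hR'
  obtain ⟨F, hF⟩ := AdicCompletion.mk_surjective (Ideal.span {a}) (M ⧸ R')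
    (AdicCompletion.map (Ideal.span {a}) R'.mkQ x)
  have hbot : ((Ideal.span {a}) ^ n • ⊤ : Submodule A (M ⧸ R')) = ⊥ := by
    rw [eq_bot_iff]
    intro q hq
    obtain ⟨w, rfl⟩ := (mem_iff a n q).mp hq
    obtain ⟨w', rfl⟩ := Submodule.Quotient.mk_surjective _ w
    rw [← Submodule.Quotient.mk_smul, Submodule.mem_bot, Submodule.Quotient.mk_eq_zero]
    exact ⟨w', rfl⟩
  have hconst : ∀ k, n ≤ k → F.val n = F.val k := by
    intro k hk
    have := F.property hk
    rwa [hbot, SModEq.bot] at this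
  obtain ⟨m₂, hm₂⟩ := Submodule.Quotient.mk_surjective R' (F.val n)
  have hofm₂ : AdicCompletion.map (Ideal.span {a}) R'.mkQ x
      = of (Ideal.span {a}) (M ⧸ R') (R'.mkQ m₂) := by
    rw [← hF]
    ext k
    have hm₂' : R'.mkQ m₂ = F.val n := hm₂
    rw [AdicCompletion.mk_apply_coe, of_apply, Submodule.mkQ_apply, Submodule.mkQ_apply, hm₂']
    rcases le_total k n with h | h
    · exact F.property h
    · rw [hconst k h]
  have hexact := AdicCompletion.map_exact (I := Ideal.span {a}) (f := R'.subtype) (g := R'.mkQ)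
    (Submodule.injective_subtype R') (LinearMap.exact_subtype_mkQ R') (Submodule.mkQ_surjective R')
  have h0 : AdicCompletion.map (Ideal.span {a}) R'.mkQ (x - of (Ideal.span {a}) M m₂) = 0 := by
    rw [map_sub, map_of, hofm₂, sub_self]
  obtain ⟨w, hw⟩ := (hexact _).mp h0
  obtain ⟨v, hv⟩ := AdicCompletion.map_surjective (Ideal.span {a})
    (LinearMap.surjective_rangeRestrict ((a ^ n : A) • (LinearMap.id : M →ₗ[A] M))) w
  have hcomp : R'.subtype ∘ₗ ((a ^ n : A) • (LinearMap.id : M →ₗ[A] M)).rangeRestrict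
      = (a ^ n : A) • (LinearMap.id : M →ₗ[A] M) := by
    ext m; rfl
  have hfin : x - of (Ideal.span {a}) M m₂ = (a ^ n : A) • v := by
    rw [← hw, ← hv, AdicCompletion.map_comp_apply, hcomp, map_smul_id]
  exact ⟨m₂, v, by rw [← hfin]; abel⟩

lemma completion_torsion_small
    {c : ℕ} (hc : ∀ (z : M) (t : ℕ), a ^ t • z = 0 → a ^ c • z = 0)
    (w : AdicCompletion (Ideal.span {a}) M) (t : ℕ) (hw : (a ^ t : A) • w = 0) :
    (a ^ c : A) • w = 0 := by
  set f : M →ₗ[A] M := (a ^ t : A) • LinearMap.id with hf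
  have hexact : Function.Exact (LinearMap.ker f).subtype f.rangeRestrict := by
    rw [LinearMap.exact_iff, LinearMap.ker_rangeRestrict]
    exact (Submodule.range_subtype (LinearMap.ker f)).symm
  have hmexact := AdicCompletion.map_exact (I := Ideal.span {a})
    (f := (LinearMap.ker f).subtype) (g := f.rangeRestrict)
    (Submodule.injective_subtype (LinearMap.ker f)) hexact (LinearMap.surjective_rangeRestrict f)
  have hcomp : (LinearMap.range f).subtype ∘ₗ f.rangeRestrict = f := by
    ext m; rfl
  have h1 : AdicCompletion.map (Ideal.span {a}) (LinearMap.range f).subtype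
      (AdicCompletion.map (Ideal.span {a}) f.rangeRestrict w) = 0 := by
    rw [AdicCompletion.map_comp_apply, hcomp, hf, map_smul_id, hw]
  have h2 : AdicCompletion.map (Ideal.span {a}) f.rangeRestrict w = 0 :=
    AdicCompletion.map_injective (Ideal.span {a}) (Submodule.injective_subtype _)
      (by rw [h1, _root_.map_zero])
  obtain ⟨v, hv⟩ := (hmexact w).mp h2
  rw [← hv, ← map_smul']
  have hv0 : (a ^ c : A) • v = 0 := by
    ext k
    obtain ⟨κ, hκ⟩ := Submodule.Quotient.mk_surjective _ (v.val k)
    have hκ0 : (a ^ c : A) • (κ : M) = 0 := by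
      refine hc _ t ?_
      have := κ.property
      simp only [hf, LinearMap.mem_ker, LinearMap.smul_apply, LinearMap.id_coe, id_eq] at this
      exact this
    rw [val_smul_apply, ← hκ, ← Submodule.Quotient.mk_smul, val_zero_apply]
    show Submodule.Quotient.mk ((a ^ c : A) • κ)
        = (0 : (LinearMap.ker f) ⧸ ((Ideal.span {a}) ^ k • ⊤ : Submodule A (LinearMap.ker f)))
    have : ((a ^ c : A) • κ : LinearMap.ker f) = 0 := by
      ext
      simpa using hκ0
    rw [this, Submodule.Quotient.mk_zero]
  rw [hv0, _root_.map_zero]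

end Small

variable {A : Type*} [CommRing A] (a : A)
variable {M : Type*} [AddCommGroup M] [Module A M]
variable [IsNoetherianRing A] [Module.Finite A M]

lemma exists_of_add_smul (x : AdicCompletion (Ideal.span {a}) M) (n : ℕ) :
    ∃ (m : M) (z : AdicCompletion (Ideal.span {a}) M),
      x = of (Ideal.span {a}) M m + (a ^ n : A) • z := by
  obtain ⟨N, π, hπ⟩ := Module.Finite.exists_fin' A M
  haveI : Module.Finite A ((Fin N → A) ⧸ LinearMap.ker π) :=
    Module.Finite.of_surjective (LinearMap.ker π).mkQ (Submodule.mkQ_surjective _)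
  let e : ((Fin N → A) ⧸ LinearMap.ker π) ≃ₗ[A] M := π.quotKerEquivOfSurjective hπ
  obtain ⟨m', z', h'⟩ := exists_of_add_smul_small a
    (AdicCompletion.map (Ideal.span {a})
      (e.symm : M →ₗ[A] ((Fin N → A) ⧸ LinearMap.ker π)) x) n
  refine ⟨e m', AdicCompletion.map (Ideal.span {a})
    (e : ((Fin N → A) ⧸ LinearMap.ker π) →ₗ[A] M) z', ?_⟩
  have h2 := congrArg (AdicCompletion.map (Ideal.span {a})
    (e : ((Fin N → A) ⧸ LinearMap.ker π) →ₗ[A] M)) h'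
  rw [AdicCompletion.map_comp_apply, map_add, map_of, map_smul'] at h2
  have he : (e : ((Fin N → A) ⧸ LinearMap.ker π) →ₗ[A] M)
      ∘ₗ (e.symm : M →ₗ[A] ((Fin N → A) ⧸ LinearMap.ker π)) = LinearMap.id := by
    ext m; simp
  rwa [he, AdicCompletion.map_id, LinearMap.id_apply] at h2

lemma completion_torsion
    {c : ℕ} (hc : ∀ (z : M) (t : ℕ), a ^ t • z = 0 → a ^ c • z = 0)
    (w : AdicCompletion (Ideal.span {a}) M) (t : ℕ) (hw : (a ^ t : A) • w = 0) :
    (a ^ c : A) • w = 0 := by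
  obtain ⟨N, π, hπ⟩ := Module.Finite.exists_fin' A M
  haveI : Module.Finite A ((Fin N → A) ⧸ LinearMap.ker π) :=
    Module.Finite.of_surjective (LinearMap.ker π).mkQ (Submodule.mkQ_surjective _)
  let e : ((Fin N → A) ⧸ LinearMap.ker π) ≃ₗ[A] M := π.quotKerEquivOfSurjective hπ
  have hc' : ∀ (z : (Fin N → A) ⧸ LinearMap.ker π) (t : ℕ),
      a ^ t • z = 0 → a ^ c • z = 0 := by
    intro z t hz
    have h0 : a ^ t • e z = 0 := by rw [← map_smul, hz, _root_.map_zero]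
    have h2 := hc (e z) t h0
    rw [← map_smul] at h2
    simpa using congrArg e.symm h2
  have hsmall := completion_torsion_small a hc'
    (AdicCompletion.map (Ideal.span {a})
      (e.symm : M →ₗ[A] ((Fin N → A) ⧸ LinearMap.ker π)) w) t
    (by rw [← map_smul', hw, _root_.map_zero])
  have h3 := congrArg (AdicCompletion.map (Ideal.span {a})
    (e : ((Fin N → A) ⧸ LinearMap.ker π) →ₗ[A] M)) hsmall
  rw [map_smul', AdicCompletion.map_comp_apply, _root_.map_zero] at h3
  have he : (e : ((Fin N → A) ⧸ LinearMap.ker π) →ₗ[A] M)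
      ∘ₗ (e.symm : M →ₗ[A] ((Fin N → A) ⧸ LinearMap.ker π)) = LinearMap.id := by
    ext m; simp
  rwa [he, AdicCompletion.map_id, LinearMap.id_apply] at h3

end BLaux



/-- Beauville–Laszlo type gluing: for a Noetherian ring `A`, `a ∈ A`, and a finitely
generated `A`-module `M`, the square with corners `M`, `M̂` (the `a`-adic completion),
`M[1/a]` and `M̂[1/a]` is a pullback: the map from `M` to the set of pairs
`(x, y) ∈ M̂ × M[1/a]` with the same image in `M̂[1/a]` is a bijection. -/
theorem statement2 (A : Type*) [CommRing A] [IsNoetherianRing A] (a : A)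
    (M : Type*) [AddCommGroup M] [Module A M] [Module.Finite A M] :
    (∀ m : M,
      LocalizedModule.mkLinearMap (Submonoid.powers a) (AdicCompletion (Ideal.span {a}) M)
          (AdicCompletion.of (Ideal.span {a}) M m) =
        LocalizedModule.map (Submonoid.powers a) (AdicCompletion.of (Ideal.span {a}) M)
          (LocalizedModule.mkLinearMap (Submonoid.powers a) M m)) ∧
    ∀ (x : AdicCompletion (Ideal.span {a}) M)
      (y : LocalizedModule (Submonoid.powers a) M),
      LocalizedModule.mkLinearMap (Submonoid.powers a) (AdicCompletion (Ideal.span {a}) M) x =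
        LocalizedModule.map (Submonoid.powers a) (AdicCompletion.of (Ideal.span {a}) M) y →
      ∃! m : M,
        AdicCompletion.of (Ideal.span {a}) M m = x ∧
        LocalizedModule.mkLinearMap (Submonoid.powers a) M m = y := by
  
  classical
  constructor
  · intro m
    rw [LocalizedModule.mkLinearMap_apply, LocalizedModule.mkLinearMap_apply,
      LocalizedModule.map_mk]
  · intro x y hxy
    obtain ⟨c, hc⟩ := BLaux.torsion_bound a (M := M)
    obtain ⟨m₀, s, rfl⟩ : ∃ m₀ s, y = LocalizedModule.mk m₀ s := by
      induction y using LocalizedModule.induction_on with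
      | h m s => exact ⟨m, s, rfl⟩
    obtain ⟨k, hk⟩ := (Submonoid.mem_powers_iff _ _).mp s.property
    rw [LocalizedModule.mkLinearMap_apply, LocalizedModule.map_mk, LocalizedModule.mk_eq] at hxy
    obtain ⟨u, hu⟩ := hxy
    obtain ⟨j, hj⟩ := (Submonoid.mem_powers_iff _ _).mp u.property
    have hu' : (u : A) • (s : A) • x = (u : A) • AdicCompletion.of (Ideal.span {a}) M m₀ := by
      simpa [Submonoid.smul_def, one_smul] using hu
    have hux : (a ^ (j + k) : A) • x
        = AdicCompletion.of (Ideal.span {a}) M ((a ^ j : A) • m₀) := by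
      rw [pow_add, mul_smul, hj, hk, map_smul]
      exact hu'
    obtain ⟨m₂, z, hz⟩ := BLaux.exists_of_add_smul a x (j + k + c)
    have e0 : x - AdicCompletion.of (Ideal.span {a}) M m₂ = (a ^ (j + k + c) : A) • z := by
      rw [hz]; abel
    have h1 : AdicCompletion.of (Ideal.span {a}) M
          ((a ^ j : A) • m₀ - (a ^ (j + k) : A) • m₂)
        = (a ^ (j + k + (j + k + c)) : A) • z := by
      have hux' : (a ^ j : A) • AdicCompletion.of (Ideal.span {a}) M m₀
          = (a ^ (j + k) : A) • x := by
        rw [← map_smul]; exact hux.symm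
      calc AdicCompletion.of (Ideal.span {a}) M ((a ^ j : A) • m₀ - (a ^ (j + k) : A) • m₂)
          = (a ^ (j + k) : A) • x
            - (a ^ (j + k) : A) • AdicCompletion.of (Ideal.span {a}) M m₂ := by
            rw [map_sub, map_smul, map_smul, hux']
        _ = (a ^ (j + k) : A) • (x - AdicCompletion.of (Ideal.span {a}) M m₂) := by
            rw [smul_sub]
        _ = (a ^ (j + k) : A) • ((a ^ (j + k + c) : A) • z) := by rw [e0]
        _ = (a ^ (j + k + (j + k + c)) : A) • z := by rw [← mul_smul, ← pow_add]
    have h2 : ((a ^ j : A) • m₀ - (a ^ (j + k) : A) • m₂)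
        ∈ ((Ideal.span {a}) ^ (j + k + (j + k + c)) • ⊤ : Submodule A M) := by
      have hval := congrArg
        (fun v : AdicCompletion (Ideal.span {a}) M => v.val (j + k + (j + k + c))) h1
      simp only [AdicCompletion.of_apply, AdicCompletion.val_smul_apply] at hval
      rw [BLaux.smul_quot_eq_zero a _ (z.val _), Submodule.mkQ_apply,
        Submodule.Quotient.mk_eq_zero] at hval
      exact hval
    obtain ⟨m₃, hm₃⟩ := (BLaux.mem_iff a _ _).mp h2
    have hofm : AdicCompletion.of (Ideal.span {a}) M (m₂ + (a ^ (j + k + c) : A) • m₃) = x := by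
      have e1 : x - AdicCompletion.of (Ideal.span {a}) M (m₂ + (a ^ (j + k + c) : A) • m₃)
          = (a ^ (j + k + c) : A) • (z - AdicCompletion.of (Ideal.span {a}) M m₃) := by
        rw [map_add, map_smul, smul_sub]
        rw [hz]; abel
      have e2 : (a ^ (j + k + (j + k + c)) : A)
          • (z - AdicCompletion.of (Ideal.span {a}) M m₃) = 0 := by
        rw [smul_sub, ← h1, ← map_smul, ← hm₃, sub_self]
      have e3 : (a ^ c : A) • (z - AdicCompletion.of (Ideal.span {a}) M m₃) = 0 :=
        BLaux.completion_torsion a hc _ _ e2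
      have e4 : x - AdicCompletion.of (Ideal.span {a}) M (m₂ + (a ^ (j + k + c) : A) • m₃)
          = 0 := by
        rw [e1, show j + k + c = j + k + c from rfl, pow_add a (j + k) c, mul_smul, e3,
          smul_zero]
      exact (sub_eq_zero.mp e4).symm
    have key : (a ^ (j + k) : A) • (m₂ + (a ^ (j + k + c) : A) • m₃) = (a ^ j : A) • m₀ := by
      have e5 : (a ^ (j + k) : A) • (m₂ + (a ^ (j + k + c) : A) • m₃)
          = (a ^ (j + k) : A) • m₂ + (a ^ (j + k + (j + k + c)) : A) • m₃ := by
        rw [smul_add, ← mul_smul, ← pow_add]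
      rw [e5, ← hm₃]; abel
    have hmk : LocalizedModule.mkLinearMap (Submonoid.powers a) M
        (m₂ + (a ^ (j + k + c) : A) • m₃) = LocalizedModule.mk m₀ s := by
      rw [LocalizedModule.mkLinearMap_apply, LocalizedModule.mk_eq]
      refine ⟨⟨a ^ j, j, rfl⟩, ?_⟩
      simp only [Submonoid.smul_def, Submonoid.mk_smul, OneMemClass.coe_one, one_smul, ← hk]
      rw [smul_smul, ← pow_add]
      exact key
    refine ⟨m₂ + (a ^ (j + k + c) : A) • m₃, ⟨hofm, hmk⟩, ?_⟩
    rintro m' ⟨hx', hy'⟩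
    have hof0 : AdicCompletion.of (Ideal.span {a}) M
        (m' - (m₂ + (a ^ (j + k + c) : A) • m₃)) = 0 := by
      rw [map_sub, hx', hofm, sub_self]
    have hmem : (m' - (m₂ + (a ^ (j + k + c) : A) • m₃))
        ∈ ((Ideal.span {a}) ^ c • ⊤ : Submodule A M) := by
      have hval := congrArg (fun v : AdicCompletion (Ideal.span {a}) M => v.val c) hof0
      simp only [AdicCompletion.of_apply, AdicCompletion.val_zero_apply] at hval
      rw [Submodule.mkQ_apply, Submodule.Quotient.mk_eq_zero] at hval
      exact hval
    obtain ⟨e', he'⟩ := (BLaux.mem_iff a _ _).mp hmem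
    have hmkeq : LocalizedModule.mk m' (1 : Submonoid.powers a)
        = LocalizedModule.mk (m₂ + (a ^ (j + k + c) : A) • m₃) (1 : Submonoid.powers a) := by
      have := hy'.trans hmk.symm
      rwa [LocalizedModule.mkLinearMap_apply, LocalizedModule.mkLinearMap_apply] at this
    obtain ⟨u₂, hu₂⟩ := LocalizedModule.mk_eq.mp hmkeq
    obtain ⟨t, ht⟩ := (Submonoid.mem_powers_iff _ _).mp u₂.property
    have ht0 : (a ^ t : A) • (m' - (m₂ + (a ^ (j + k + c) : A) • m₃)) = 0 := by
      have hu₂' : (u₂ : A) • m' = (u₂ : A) • (m₂ + (a ^ (j + k + c) : A) • m₃) := by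
        simpa [Submonoid.smul_def, one_smul] using hu₂
      rw [ht, smul_sub, hu₂', sub_self]
    have h5 : (a ^ (t + c) : A) • e' = 0 := by
      rw [pow_add, mul_smul, ← he', ht0]
    have h6 : (a ^ c : A) • e' = 0 := hc e' (t + c) h5
    have h7 : m' - (m₂ + (a ^ (j + k + c) : A) • m₃) = 0 := by rw [he', h6]
    exact sub_eq_zero.mp h7
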